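/- Consider the TRS with rules c → 1 : c, f(x : σ) → g(x, σ), g(0, σ) → f(σ), g(1, σ) → 1 : f(σ), together with x : σ → overflow. Every ground term of sort s built from c, f, g, ':' and the data constants 0, 1 rewrites to a term with root ':' (before applying the overflow rule); equivalently, this stream specification is productive for all ground terms of sort s. -/

import Mathlib

/-- First-order terms over a signature `F` with natural-number variables. -/
inductive Trm (F : Type) : Type
  | var : ℕ → Trm F
  | app : F → List (Trm F) → Trm F

namespace Trm

variable {F : Type}

/-- Application of a substitution to a term. -/
def subst (σ : ℕ → Trm F) : Trm F → Trm F
  | var n => σ n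
  | app f ts => app f (ts.attach.map fun x => subst σ x.1)
decreasing_by have := List.sizeOf_lt_of_mem x.2; simp; omega

/-- The list of variables occurring in a term. -/
def varList : Trm F → List ℕ
  | var n => [n]
  | app _ ts => ts.attach.flatMap fun x => varList x.1
decreasing_by have := List.sizeOf_lt_of_mem x.2; simp; omega

/-- A term is ground if it contains no variables. -/
def Ground (t : Trm F) : Prop := varList t = []

/-- The subterm at a position (a list of argument indices), if it exists. -/
def subtermAt : Trm F → List ℕ → Option (Trm F)
  | t, [] => some t
  | var _, _ :: _ => none
  | app _ ts, i :: p => (ts[i]?).bind fun t => subtermAt t p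

/-- Replacement of the subterm at a position by another term, if the position exists. -/
def replaceAt : Trm F → List ℕ → Trm F → Option (Trm F)
  | _, [], s => some s
  | var _, _ :: _, _ => none
  | app f ts, i :: p, s =>
      (ts[i]?).bind fun t => (replaceAt t p s).map fun t' => app f (ts.set i t')

def IsVar : Trm F → Prop
  | var _ => True
  | app _ _ => False

end Trm

open Trm

variable {F : Type}

/-- A rewrite rule is a pair (lhs, rhs). -/
abbrev Rule (F : Type) := Trm F × Trm F

/-- A term is a redex w.r.t. a TRS `R` if it is an instance of a left-hand side. -/
def IsRedex (R : Set (Rule F)) (t : Trm F) : Prop :=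
  ∃ (l r : Trm F) (σ : ℕ → Trm F), (l, r) ∈ R ∧ t = subst σ l

/-- `t` has a redex at position `p`. -/
def HasRedexAt (R : Set (Rule F)) (t : Trm F) (p : List ℕ) : Prop :=
  ∃ s, subtermAt t p = some s ∧ IsRedex R s

/-- A rewrite step of `R` at position `p`. -/
def RewriteAt (R : Set (Rule F)) (t t' : Trm F) (p : List ℕ) : Prop :=
  ∃ (l r : Trm F) (σ : ℕ → Trm F), (l, r) ∈ R ∧
    subtermAt t p = some (subst σ l) ∧ replaceAt t p (subst σ r) = some t'

/-- A rewrite step of `R` (at some position). -/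
def Rewrite (R : Set (Rule F)) (t t' : Trm F) : Prop := ∃ p, RewriteAt R t t' p

/-- Many-step rewriting. -/
abbrev RewriteStar (R : Set (Rule F)) : Trm F → Trm F → Prop :=
  Relation.ReflTransGen (Rewrite R)

/-- `p` is a strict (proper) prefix of `q`, i.e. position `p` is strictly above `q`. -/
def StrictPref (p q : List ℕ) : Prop := p <+: q ∧ p ≠ q

/-- Two positions are independent (parallel) if neither is a prefix of the other. -/
def Indep (p q : List ℕ) : Prop := ¬ p <+: q ∧ ¬ q <+: p

/-- An outermost rewrite step at position `p`: no redex strictly above `p`. -/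
def OutStepAt (R : Set (Rule F)) (t t' : Trm F) (p : List ℕ) : Prop :=
  RewriteAt R t t' p ∧ ∀ q, StrictPref q p → ¬ HasRedexAt R t q

def OutStep (R : Set (Rule F)) (t t' : Trm F) : Prop := ∃ p, OutStepAt R t t' p

/-- A non-outermost rewrite step at position `p`: some redex strictly above `p`. -/
def NonOutStepAt (R : Set (Rule F)) (t t' : Trm F) (p : List ℕ) : Prop :=
  RewriteAt R t t' p ∧ ∃ q, StrictPref q p ∧ HasRedexAt R t q

def NonOutStep (R : Set (Rule F)) (t t' : Trm F) : Prop := ∃ p, NonOutStepAt R t t' p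

/-- A sequence of rewrite steps at the listed positions. -/
inductive StepsAt (R : Set (Rule F)) : Trm F → Trm F → List (List ℕ) → Prop
  | nil (t) : StepsAt R t t []
  | cons {t t' t'' p ps} : RewriteAt R t t' p → StepsAt R t' t'' ps →
      StepsAt R t t'' (p :: ps)

/-- A parallel rewrite step: contraction of redexes at pairwise independent positions. -/
def ParStep (R : Set (Rule F)) (t t' : Trm F) : Prop :=
  ∃ ps : List (List ℕ), ps.Pairwise Indep ∧ StepsAt R t t' ps

/-- A parallel step all of whose contracted positions are non-outermost in the source,
i.e. each contracted redex lies strictly below another redex. -/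
def ParNonOut (R : Set (Rule F)) (t t' : Trm F) : Prop :=
  ∃ ps : List (List ℕ), ps.Pairwise Indep ∧
    (∀ p ∈ ps, ∃ q, StrictPref q p ∧ HasRedexAt R t q) ∧ StepsAt R t t' ps

/-- Left-linearity: no variable occurs twice in a left-hand side. -/
def LeftLinear (R : Set (Rule F)) : Prop := ∀ l r, (l, r) ∈ R → (varList l).Nodup

/-- Non-overlapping: the only overlaps between left-hand sides are trivial root
overlaps of a rule with itself. -/
def NonOverlapping (R : Set (Rule F)) : Prop :=
  ∀ l₁ r₁ l₂ r₂, (l₁, r₁) ∈ R → (l₂, r₂) ∈ R →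
    ∀ p s, subtermAt l₁ p = some s → ¬ IsVar s →
      ∀ (σ τ : ℕ → Trm F), subst σ s = subst τ l₂ →
        p = [] ∧ l₁ = l₂ ∧ r₁ = r₂

/-- Orthogonality: left-linear and non-overlapping. -/
def Orthogonal (R : Set (Rule F)) : Prop := LeftLinear R ∧ NonOverlapping R

/-- A symbol `c` is a constructor of `R` if no left-hand side has root `c`. -/
def IsConstructor (R : Set (Rule F)) (c : F) : Prop :=
  ∀ l r, (l, r) ∈ R → ∀ ts, l ≠ app c ts

/-- An infinite outermost reduction (with its sequence of contracted positions). -/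
def InfOutRed (R : Set (Rule F)) (ts : ℕ → Trm F) (ps : ℕ → List ℕ) : Prop :=
  ∀ i, OutStepAt R (ts i) (ts (i + 1)) (ps i)

/-- Balancedness: every redex is eventually reduced or consumed by a step at or
above its position. -/
def BalancedRed (R : Set (Rule F)) (ts : ℕ → Trm F) (ps : ℕ → List ℕ) : Prop :=
  ∀ i q, HasRedexAt R (ts i) q → ∃ j, i ≤ j ∧ ps j <+: q

/-- BalancedRed outermost termination: no infinite balanced outermost reduction. -/
def BalOutTerminating (R : Set (Rule F)) : Prop :=
  ¬ ∃ (ts : ℕ → Trm F) (ps : ℕ → List ℕ), InfOutRed R ts ps ∧ BalancedRed R ts ps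

/-- Outermost termination: no infinite outermost reduction. -/
def OutTerminating (R : Set (Rule F)) : Prop :=
  ¬ ∃ (ts : ℕ → Trm F) (ps : ℕ → List ℕ), InfOutRed R ts ps

/-- A term with the stream constructor ':' (here `c`) at the root. -/
def ConsRooted (c : F) (t : Trm F) : Prop := ∃ u t', t = app c [u, t']

/-- `ConsTower c n t` says `t = u₁ : u₂ : ⋯ : uₙ : t'`. -/
def ConsTower (c : F) : ℕ → Trm F → Prop
  | 0, _ => True
  | n + 1, t => ∃ u t', t = app c [u, t'] ∧ ConsTower c n t'

/-- Productivity of a term: it produces arbitrarily many ':'-elements. -/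
def Productive (R : Set (Rule F)) (c : F) (t : Trm F) : Prop :=
  ∀ n, ∃ t', RewriteStar R t t' ∧ ConsTower c n t'

/-- Well-sortedness of terms, with sorts `Bool` (`false` = data, `true` = stream),
argument/result sorts given by `ar` and variable sorts by `vs`. -/
inductive WS (ar : F → List Bool × Bool) (vs : ℕ → Bool) : Trm F → Bool → Prop
  | var (n) : WS ar vs (var n) (vs n)
  | app (f) (ts : List (Trm F)) : ts.length = (ar f).1.length →
      (∀ (i : ℕ) t b, ts[i]? = some t → (ar f).1[i]? = some b → WS ar vs t b) →
      WS ar vs (app f ts) (ar f).2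

/-- All function symbols of a term belong to the set `S`. -/
inductive SymOver (S : Set F) : Trm F → Prop
  | var (n) : SymOver S (var n)
  | app (f) (ts : List (Trm F)) : f ∈ S → (∀ t ∈ ts, SymOver S t) → SymOver S (app f ts)

/-- A stream specification `(Σ_d, Σ_s, R_d, R_s)` over signature `F`. -/
structure StreamSpec (F : Type) where
  /-- argument sorts and result sort of each symbol -/
  ar : F → List Bool × Bool
  /-- sorts of variables -/
  vs : ℕ → Bool
  /-- the stream constructor ':' of type d × s → s -/
  cons : F
  cons_ar : ar cons = ([false, true], true)
  /-- the data signature Σ_d -/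
  Sd : Set F
  /-- the stream signature Σ_s -/
  Ss : Set F
  cons_not_d : cons ∉ Sd
  cons_not_s : cons ∉ Ss
  d_sorts : ∀ f ∈ Sd, (∀ b ∈ (ar f).1, b = false) ∧ (ar f).2 = false
  s_res : ∀ f ∈ Ss, (ar f).2 = true
  /-- the data rules -/
  Rd : Set (Rule F)
  /-- the stream rules -/
  Rs : Set (Rule F)
  Rd_data : ∀ rl ∈ Rd, SymOver Sd rl.1 ∧ SymOver Sd rl.2
  Rd_sorted : ∀ l r, (l, r) ∈ Rd → WS ar vs l false ∧ WS ar vs r false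
  /-- R_d is terminating -/
  Rd_term : WellFounded (fun a b : Trm F => Rewrite Rd b a)
  /-- R_d ∪ R_s is orthogonal -/
  orth : Orthogonal (Rd ∪ Rs)
  Rs_sorted : ∀ l r, (l, r) ∈ Rs → WS ar vs l true ∧ WS ar vs r true
  /-- left-hand sides of R_s have the shape f(u₁,…,uₙ,t₁,…,tₘ) with f ∈ Σ_s and
  each stream argument tᵢ a variable or of the form x : σ -/
  lhs_shape : ∀ l r, (l, r) ∈ Rs → ∃ f args, f ∈ Ss ∧ l = app f args ∧
    ∀ (i : ℕ) a, args[i]? = some a → (ar f).1[i]? = some true →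
      (∃ n, a = var n) ∨ (∃ n m, a = app cons [var n, var m])
  /-- exhaustiveness: every ground term f(u₁,…,uₙ,u_{n+1}:t₁,…) with the uᵢ data
  normal forms is a redex of R_s -/
  exhaustive : ∀ f ts, f ∈ Ss → Ground (app f ts) →
    SymOver (Sd ∪ Ss ∪ {cons}) (app f ts) → WS ar vs (app f ts) true →
    (∀ (i : ℕ) t, ts[i]? = some t →
      ((ar f).1[i]? = some false → ∀ t', ¬ Rewrite Rd t t') ∧
      ((ar f).1[i]? = some true → ∃ u t', t = app cons [u, t'])) →
    IsRedex Rs (app f ts)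

/-- A ground term of sort s over the signature of the specification. -/
def StreamSpec.GroundStream (S : StreamSpec F) (t : Trm F) : Prop :=
  Ground t ∧ SymOver (S.Sd ∪ S.Ss ∪ {S.cons}) t ∧ WS S.ar S.vs t true

/-- Productivity of the specification on all ground terms of sort s. -/
def StreamSpec.ProductiveAll (S : StreamSpec F) : Prop :=
  ∀ t, S.GroundStream t → Productive (S.Rd ∪ S.Rs) S.cons t

/-- The additional rule `x : σ → overflow`. -/
def ovRule (c ov : F) : Rule F := (app c [var 0, var 1], app ov [])


/-- The signature with data constants 0, 1 and stream symbols c, f, g, ':'. -/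
inductive F17 : Type
  | zero | one | c | f | g | cons

/-- Sorts: 0, 1 : d; c : s; f : s → s; g : d × s → s; ':' : d × s → s. -/
def ar17 : F17 → List Bool × Bool
  | F17.zero => ([], false)
  | F17.one => ([], false)
  | F17.c => ([], true)
  | F17.f => ([true], true)
  | F17.g => ([false, true], true)
  | F17.cons => ([false, true], true)

/-- The rules c → 1 : c, f(x : σ) → g(x, σ), g(0, σ) → f(σ), g(1, σ) → 1 : f(σ). -/
def R17 : Set (Rule F17) :=
  {(Trm.app F17.c [], Trm.app F17.cons [Trm.app F17.one [], Trm.app F17.c []]),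
   (Trm.app F17.f [Trm.app F17.cons [Trm.var 0, Trm.var 1]],
    Trm.app F17.g [Trm.var 0, Trm.var 1]),
   (Trm.app F17.g [Trm.app F17.zero [], Trm.var 1], Trm.app F17.f [Trm.var 1]),
   (Trm.app F17.g [Trm.app F17.one [], Trm.var 1],
    Trm.app F17.cons [Trm.app F17.one [], Trm.app F17.f [Trm.var 1]])}
-- AUX START
namespace ProdAux

open Trm F17

/-- single-step context lifting -/
lemma rewrite_ctx {R : Set (Rule F17)} {s s' : Trm F17} (h : Rewrite R s s')
    (f : F17) (ts : List (Trm F17)) (i : ℕ) (hi : ts[i]? = some s) :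
    Rewrite R (app f ts) (app f (ts.set i s')) := by
  obtain ⟨p, l, r, σ, hm, h1, h2⟩ := h
  have hi' : ts[i]? = some s := hi
  exact ⟨i :: p, l, r, σ, hm, by simp [subtermAt, hi', h1],
    by simp [replaceAt, hi', h2]⟩

lemma star_f {s s' : Trm F17} (h : RewriteStar R17 s s') :
    RewriteStar R17 (app F17.f [s]) (app F17.f [s']) := by
  induction h with
  | refl => exact .refl
  | tail _ hstep ih =>
      exact ih.tail (by simpa using rewrite_ctx hstep F17.f [_] 0 rfl)

lemma star_cons {u s s' : Trm F17} (h : RewriteStar R17 s s') :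
    RewriteStar R17 (app F17.cons [u, s]) (app F17.cons [u, s']) := by
  induction h with
  | refl => exact .refl
  | tail _ hstep ih =>
      exact ih.tail (by simpa using rewrite_ctx hstep F17.cons [u, _] 1 rfl)

/-- root rewrite step -/
lemma root_step {t t' : Trm F17} (l r : Trm F17) (σ : ℕ → Trm F17)
    (hm : (l, r) ∈ R17) (h1 : t = subst σ l) (h2 : t' = subst σ r) :
    Rewrite R17 t t' := by
  exact ⟨[], l, r, σ, hm, by simp [subtermAt, h1], by simp [replaceAt, h2]⟩

def sub2 (x y : Trm F17) : ℕ → Trm F17 := fun n => if n = 0 then x else y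

lemma step_c : Rewrite R17 (app F17.c []) (app F17.cons [app F17.one [], app F17.c []]) := by
  apply root_step _ _ (sub2 (var 0) (var 0)) (show _ ∈ R17 by left; rfl)
  · simp [subst]
  · simp [subst]

lemma step_f (x y : Trm F17) :
    Rewrite R17 (app F17.f [app F17.cons [x, y]]) (app F17.g [x, y]) := by
  apply root_step _ _ (sub2 x y) (show _ ∈ R17 by right; left; rfl)
  · simp [subst, sub2]
  · simp [subst, sub2]

lemma step_g0 (y : Trm F17) :
    Rewrite R17 (app F17.g [app F17.zero [], y]) (app F17.f [y]) := by
  apply root_step _ _ (sub2 y y) (show _ ∈ R17 by right; right; left; rfl)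
  · simp [subst, sub2]
  · simp [subst, sub2]

lemma step_g1 (y : Trm F17) :
    Rewrite R17 (app F17.g [app F17.one [], y])
      (app F17.cons [app F17.one [], app F17.f [y]]) := by
  apply root_step _ _ (sub2 y y) (show _ ∈ R17 by right; right; right; rfl)
  · simp [subst, sub2]
  · simp [subst, sub2]

def GD (u : Trm F17) : Prop := u = app F17.zero [] ∨ u = app F17.one []

inductive GS : Trm F17 → Prop
  | cons (u t) : GD u → GS t → GS (app F17.cons [u, t])
  | c : GS (app F17.c [])
  | f (t) : GS t → GS (app F17.f [t])
  | g (u t) : GD u → GS t → GS (app F17.g [u, t])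

lemma lemB : ∀ t, GS t → ∃ t', GS t' ∧
    RewriteStar R17 (app F17.f [t]) (app F17.cons [app F17.one [], t']) := by
  intro t h
  induction h with
  | cons u s hu hs ih =>
      rcases hu with h0 | h1
      · subst h0
        obtain ⟨t', ht', hstar⟩ := ih
        exact ⟨t', ht', ((Relation.ReflTransGen.single (step_f _ _)).tail
          (step_g0 s)).trans hstar⟩
      · subst h1
        exact ⟨app F17.f [s], GS.f _ hs,
          (Relation.ReflTransGen.single (step_f _ _)).tail (step_g1 s)⟩
  | c =>
      refine ⟨app F17.f [app F17.c []], GS.f _ GS.c, ?_⟩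
      have h1 : RewriteStar R17 (app F17.f [app F17.c []])
          (app F17.f [app F17.cons [app F17.one [], app F17.c []]]) :=
        star_f (Relation.ReflTransGen.single step_c)
      exact (h1.tail (step_f _ _)).tail (step_g1 _)
  | f s hs ih =>
      obtain ⟨t', ht', hstar⟩ := ih
      refine ⟨app F17.f [t'], GS.f _ ht', ?_⟩
      exact ((star_f hstar).tail (step_f _ _)).tail (step_g1 _)
  | g u s hu hs ih =>
      rcases hu with h0 | h1
      · subst h0
        obtain ⟨t', ht', hstar⟩ := ih
        refine ⟨app F17.f [t'], GS.f _ ht', ?_⟩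
        have h1 : RewriteStar R17 (app F17.f [app F17.g [app F17.zero [], s]])
            (app F17.f [app F17.f [s]]) := star_f (.single (step_g0 s))
        exact ((h1.trans (star_f hstar)).tail (step_f _ _)).tail (step_g1 _)
      · subst h1
        refine ⟨app F17.f [app F17.f [s]], GS.f _ (GS.f _ hs), ?_⟩
        have h1 : RewriteStar R17 (app F17.f [app F17.g [app F17.one [], s]])
            (app F17.f [app F17.cons [app F17.one [], app F17.f [s]]]) :=
          star_f (.single (step_g1 s))
        exact (h1.tail (step_f _ _)).tail (step_g1 _)

lemma lemA : ∀ t, GS t → ∃ u t', GD u ∧ GS t' ∧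
    RewriteStar R17 t (app F17.cons [u, t']) := by
  intro t h
  cases h with
  | cons u s hu hs => exact ⟨u, s, hu, hs, .refl⟩
  | c => exact ⟨_, _, Or.inr rfl, GS.c, .single step_c⟩
  | f s hs =>
      obtain ⟨t', ht', hstar⟩ := lemB s hs
      exact ⟨_, t', Or.inr rfl, ht', hstar⟩
  | g u s hu hs =>
      rcases hu with h0 | h1
      · subst h0
        obtain ⟨t', ht', hstar⟩ := lemB s hs
        exact ⟨_, t', Or.inr rfl, ht', (Relation.ReflTransGen.single (step_g0 s)).trans hstar⟩
      · subst h1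
        exact ⟨_, _, Or.inr rfl, GS.f _ hs, .single (step_g1 s)⟩

lemma ground_arg {f : F17} {ts : List (Trm F17)} (h : Ground (app f ts)) :
    ∀ t ∈ ts, Ground t := by
  intro t ht
  have := h
  unfold Ground at this ⊢
  rw [varList] at this
  rw [List.flatMap_eq_nil_iff] at this
  exact this ⟨t, ht⟩ (List.mem_attach _ _)

lemma lemC : ∀ (t : Trm F17) (b : Bool), WS ar17 (fun _ => false) t b → Ground t →
    (b = false → GD t) ∧ (b = true → GS t) := by
  intro t b h
  induction h with
  | var n => intro hg; simp [Ground, varList] at hg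
  | app f ts hlen hws ih =>
      intro hg
      have harg := ground_arg hg
      cases f with
      | zero =>
          simp [ar17] at hlen ⊢
          subst hlen
          exact Or.inl rfl
      | one =>
          simp [ar17] at hlen ⊢
          subst hlen
          exact Or.inr rfl
      | c =>
          simp [ar17] at hlen ⊢
          subst hlen
          exact GS.c
      | f =>
          simp [ar17] at hlen ⊢
          match ts, hlen with
          | [s], _ =>
            have := (ih 0 s true rfl rfl (harg s (by simp))).2 rfl
            exact GS.f _ this
      | g =>
          simp [ar17] at hlen ⊢
          match ts, hlen with
          | [u, s], _ =>
            have h1 := (ih 0 u false rfl rfl (harg u (by simp))).1 rfl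
            have h2 := (ih 1 s true rfl rfl (harg s (by simp))).2 rfl
            exact GS.g _ _ h1 h2
      | cons =>
          simp [ar17] at hlen ⊢
          match ts, hlen with
          | [u, s], _ =>
            have h1 := (ih 0 u false rfl rfl (harg u (by simp))).1 rfl
            have h2 := (ih 1 s true rfl rfl (harg s (by simp))).2 rfl
            exact GS.cons _ _ h1 h2

lemma prodGS : ∀ n (t : Trm F17), GS t → ∃ t', RewriteStar R17 t t' ∧ ConsTower F17.cons n t' := by
  intro n
  induction n with
  | zero => intro t _; exact ⟨t, .refl, trivial⟩
  | succ n ih =>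
      intro t h
      obtain ⟨u, s, _, hs, hstar⟩ := lemA t h
      obtain ⟨s', hstar', htower⟩ := ih s hs
      exact ⟨app F17.cons [u, s'], hstar.trans (star_cons hstar'),
        ⟨u, s', rfl, htower⟩⟩

end ProdAux
-- AUX END

/-- every ground term of sort s over this signature rewrites (w.r.t.
the four stream rules) to a ':'-rooted term; equivalently, the specification is
productive for all ground terms of sort s. -/
theorem example_productive :
    ∀ t : Trm F17, Ground t → WS ar17 (fun _ => false) t true →
      (∃ u t', RewriteStar R17 t (Trm.app F17.cons [u, t'])) ∧
      Productive R17 F17.cons t := by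
  intro t hg hws
  have hgs := (ProdAux.lemC t true hws hg).2 rfl
  constructor
  · obtain ⟨u, t', _, _, hstar⟩ := ProdAux.lemA t hgs
    exact ⟨u, t', hstar⟩
  · intro n; exact ProdAux.prodGS n t hgs
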